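/- Let B, C be disjoint sets of atoms and let F be an infinitary propositional formula over σ such that the dependency graph DG_{B∪C}[F] has no edge from a vertex in B to a vertex in C. Then for any interpretation I, if I \ (B ∪ C) satisfies F^I, so does I \ B. -/
import Mathlib


/-- Infinitary propositional formulas over signature `σ`:
atoms, conjunctions and disjunctions of (index-)sets of formulas, implication. -/
inductive Formula (σ : Type) : Type 1
  | atom : σ → Formula σ
  | conj : (ι : Type) → (ι → Formula σ) → Formula σ
  | disj : (ι : Type) → (ι → Formula σ) → Formula σ
  | imp : Formula σ → Formula σ → Formula σ

namespace Formula

variable {σ : Type}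

/-- `⊥` is the empty disjunction. -/
def bot : Formula σ := Formula.disj Empty (fun e => e.elim)

/-- Binary conjunction `F ∧ G`. -/
def and (F G : Formula σ) : Formula σ := Formula.conj Bool (fun b => if b then F else G)

/-- Binary disjunction `F ∨ G`. -/
def or (F G : Formula σ) : Formula σ := Formula.disj Bool (fun b => if b then F else G)

/-- Negation `¬F` abbreviates `F → ⊥`. -/
def neg (F : Formula σ) : Formula σ := Formula.imp F bot

/-- Conjunction of a set of atoms. -/
def conjAtoms (S : Set σ) : Formula σ := Formula.conj S (fun p => Formula.atom p.val)

/-- Satisfaction of an infinitary formula by an interpretation `I ⊆ σ`. -/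
def Sat (I : Set σ) : Formula σ → Prop
  | .atom p => p ∈ I
  | .conj _ f => ∀ i, Sat I (f i)
  | .disj _ f => ∃ i, Sat I (f i)
  | .imp F G => Sat I F → Sat I G

open Classical in
/-- The reduct `F^I`. -/
noncomputable def reduct (I : Set σ) : Formula σ → Formula σ
  | .atom p => if p ∈ I then Formula.atom p else bot
  | .conj ι f => Formula.conj ι (fun i => reduct I (f i))
  | .disj ι f => Formula.disj ι (fun i => reduct I (f i))
  | .imp F G => if Sat I (Formula.imp F G) then Formula.imp (reduct I F) (reduct I G) else bot

/-- `I` is an `A`-stable model of `F`: `I` is minimal w.r.t. `≤_A`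
(`J ≤_A I` iff `J ⊆ I` and `I \ J ⊆ A`) among interpretations satisfying `F^I`. -/
def AStable (A : Set σ) (I : Set σ) (F : Formula σ) : Prop :=
  Sat I (reduct I F) ∧ ∀ J : Set σ, J ⊆ I → I \ J ⊆ A → Sat J (reduct I F) → J = I

/-- A stable model is a `σ`-stable model. -/
def Stable (I : Set σ) (F : Formula σ) : Prop := AStable Set.univ I F

/-- The strictly positive atoms `P(F)`. -/
def spos : Formula σ → Set σ
  | .atom p => {p}
  | .conj _ f => ⋃ i, spos (f i)
  | .disj _ f => ⋃ i, spos (f i)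
  | .imp _ H => spos H

/-- `F` is (syntactically) the formula `⊥`, i.e. an empty disjunction. -/
def IsBot : Formula σ → Prop
  | .disj ι _ => IsEmpty ι
  | _ => False

open Classical in
mutual
/-- Positive nonnegated atoms `Pnn(F)`. -/
noncomputable def pnn : Formula σ → Set σ
  | .atom p => {p}
  | .conj _ f => ⋃ i, pnn (f i)
  | .disj _ f => ⋃ i, pnn (f i)
  | .imp G H => if IsBot H then ∅ else nnn G ∪ pnn H

/-- Negative nonnegated atoms `Nnn(F)`. -/
noncomputable def nnn : Formula σ → Set σ
  | .atom _ => ∅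
  | .conj _ f => ⋃ i, nnn (f i)
  | .disj _ f => ⋃ i, nnn (f i)
  | .imp G H => if IsBot H then ∅ else pnn G ∪ nnn H
end

/-- The rules of a formula, as antecedent/consequent pairs. -/
def rules : Formula σ → Set (Formula σ × Formula σ)
  | .atom _ => ∅
  | .conj _ f => ⋃ i, rules (f i)
  | .disj _ f => ⋃ i, rules (f i)
  | .imp G H => insert (G, H) (rules H)

/-- Edge relation of the positive dependency graph `DG_A[F]` (vertex set `A`). -/
noncomputable def DGEdge (F : Formula σ) (A : Set σ) (p q : σ) : Prop :=
  p ∈ A ∧ q ∈ A ∧ ∃ R ∈ rules F, p ∈ spos R.2 ∧ q ∈ pnn R.1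

/-- The atoms occurring in a formula. -/
def atoms : Formula σ → Set σ
  | .atom p => {p}
  | .conj _ f => ⋃ i, atoms (f i)
  | .disj _ f => ⋃ i, atoms (f i)
  | .imp G H => atoms G ∪ atoms H

/-- `G` is a definition for the set `Q` of atoms: a conjunction of formulas
`H ∧ C^∧ → q` with `q ∈ Q`, `C ⊆ Q`, and no atom of `Q` occurring in `H`. -/
def IsDefinition (Q : Set σ) (G : Formula σ) : Prop :=
  ∃ (ι : Type) (g : ι → Formula σ), G = Formula.conj ι g ∧
    ∀ i, ∃ (H : Formula σ) (C : Set σ) (q : σ),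
      q ∈ Q ∧ C ⊆ Q ∧ (∀ p ∈ Q, p ∉ atoms H) ∧
      g i = Formula.imp (Formula.and H (conjAtoms C)) (Formula.atom q)

end Formula

section Graph

variable {V : Type*}

/-- An infinite walk in the directed graph with edge relation `E`. -/
def IsInfWalk (E : V → V → Prop) (w : ℕ → V) : Prop := ∀ i, E (w i) (w (i + 1))

/-- The partition `{P₁, P₂}` is infinitely separable: every infinite walk
visits `P₁` or `P₂` only finitely often. -/
def InfSeparable (E : V → V → Prop) (P1 P2 : Set V) : Prop :=
  ∀ w : ℕ → V, IsInfWalk E w → {i | w i ∈ P1}.Finite ∨ {i | w i ∈ P2}.Finite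

/-- `u` and `v` are in the same strongly connected component:
each is reachable from the other. -/
def SameSCC (E : V → V → Prop) (u v : V) : Prop :=
  Relation.ReflTransGen E u v ∧ Relation.ReflTransGen E v u

/-- The partition `{P₁, P₂}` is separable: every strongly connected
component is contained in `P₁` or in `P₂`. -/
def Separable (E : V → V → Prop) (P1 P2 : Set V) : Prop :=
  ∀ u v, SameSCC E u v → ((u ∈ P1 ∧ v ∈ P1) ∨ (u ∈ P2 ∧ v ∈ P2))

end Graph

namespace Formula

variable {σ : Type}

lemma not_sat_bot {X : Set σ} : ¬ Sat X (bot : Formula σ) := fun ⟨i, _⟩ => i.elim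

lemma not_sat_of_isBot {X : Set σ} {F : Formula σ} (h : IsBot F) : ¬ Sat X F := by
  cases F with
  | disj ι f => rintro ⟨i, _⟩; exact (h : IsEmpty ι).false i
  | atom p => exact absurd h (by simp [IsBot])
  | conj ι f => exact absurd h (by simp [IsBot])
  | imp G H => exact absurd h (by simp [IsBot])

lemma not_sat_reduct_of_isBot {X I : Set σ} {F : Formula σ} (h : IsBot F) :
    ¬ Sat X (reduct I F) := by
  cases F with
  | disj ι f => rintro ⟨i, _⟩; exact (h : IsEmpty ι).false i
  | atom p => exact absurd h (by simp [IsBot])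
  | conj ι f => exact absurd h (by simp [IsBot])
  | imp G H => exact absurd h (by simp [IsBot])

lemma sat_of_sat_reduct {I X : Set σ} :
    ∀ {F : Formula σ}, Sat X (reduct I F) → Sat I F := by
  intro F
  induction F with
  | atom p =>
      intro h
      unfold reduct at h
      split at h
      · assumption
      · exact absurd h not_sat_bot
  | conj ι f ih =>
      intro h i
      exact ih i (h i)
  | disj ι f ih =>
      rintro ⟨i, hi⟩
      exact ⟨i, ih i hi⟩
  | imp F G ihF ihG =>
      intro h
      unfold reduct at h
      split at h
      · assumption
      · exact absurd h not_sat_bot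

lemma sat_reduct_of_spos {I X : Set σ} :
    ∀ {F : Formula σ}, (∀ p ∈ spos F, p ∈ I → p ∈ X) → Sat I F → Sat X (reduct I F) := by
  intro F
  induction F with
  | atom p =>
      intro hs h
      unfold reduct
      simp only [Sat] at h
      rw [if_pos h]
      exact hs p rfl h
  | conj ι f ih =>
      intro hs h i
      exact ih i (fun p hp => hs p (Set.mem_iUnion.2 ⟨i, hp⟩)) (h i)
  | disj ι f ih =>
      rintro hs ⟨i, hi⟩
      exact ⟨i, ih i (fun p hp => hs p (Set.mem_iUnion.2 ⟨i, hp⟩)) hi⟩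
  | imp F G ihF ihG =>
      intro hs h
      unfold reduct
      rw [if_pos h]
      intro hXF
      exact ihG hs (h (sat_of_sat_reduct hXF))

lemma anti {C X Y : Set σ} (hXY : X ⊆ Y) (hYX : Y \ X ⊆ C) {I : Set σ} :
    ∀ F : Formula σ,
      ((∀ p ∈ pnn F, p ∉ C) → Sat Y (reduct I F) → Sat X (reduct I F)) ∧
      ((∀ p ∈ nnn F, p ∉ C) → Sat X (reduct I F) → Sat Y (reduct I F)) := by
  intro F
  induction F with
  | atom p =>
      constructor
      · intro hp h
        unfold reduct at h ⊢
        split at h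
        · rename_i hpI
          rw [if_pos hpI]
          simp only [Sat] at h ⊢
          by_contra hpx
          exact hp p rfl (hYX ⟨h, hpx⟩)
        · exact absurd h not_sat_bot
      · intro _ h
        unfold reduct at h ⊢
        split at h
        · rw [if_pos (by assumption)]
          exact hXY h
        · exact absurd h not_sat_bot
  | conj ι f ih =>
      constructor
      · intro hp h i
        exact (ih i).1 (fun p hpp => hp p (Set.mem_iUnion.2 ⟨i, hpp⟩)) (h i)
      · intro hp h i
        exact (ih i).2 (fun p hpp => hp p (Set.mem_iUnion.2 ⟨i, hpp⟩)) (h i)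
  | disj ι f ih =>
      constructor
      · rintro hp ⟨i, hi⟩
        exact ⟨i, (ih i).1 (fun p hpp => hp p (Set.mem_iUnion.2 ⟨i, hpp⟩)) hi⟩
      · rintro hp ⟨i, hi⟩
        exact ⟨i, (ih i).2 (fun p hpp => hp p (Set.mem_iUnion.2 ⟨i, hpp⟩)) hi⟩
  | imp G H ihG ihH =>
      by_cases hbot : IsBot H
      · -- both reduct satisfactions are equivalent (indeed independent of X, Y)
        have key : ∀ Z : Set σ, Sat I (Formula.imp G H) → Sat Z (reduct I (Formula.imp G H)) := by
          intro Z hI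
          unfold reduct
          rw [if_pos hI]
          intro hZG
          exact absurd (hI (sat_of_sat_reduct hZG)) (not_sat_of_isBot hbot)
        constructor
        · intro _ h
          by_cases hI : Sat I (Formula.imp G H)
          · exact key X hI
          · unfold reduct at h; rw [if_neg hI] at h; exact absurd h not_sat_bot
        · intro _ h
          by_cases hI : Sat I (Formula.imp G H)
          · exact key Y hI
          · unfold reduct at h; rw [if_neg hI] at h; exact absurd h not_sat_bot
      · constructor
        · intro hp h
          unfold reduct at h ⊢
          split at h
          · rw [if_pos (by assumption)]
            unfold pnn at hp
            rw [if_neg hbot] at hp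
            intro hXG
            have hYG : Sat Y (reduct I G) :=
              (ihG).2 (fun p hpp => hp p (Set.mem_union_left _ hpp)) hXG
            exact (ihH).1 (fun p hpp => hp p (Set.mem_union_right _ hpp)) (h hYG)
          · exact absurd h not_sat_bot
        · intro hp h
          unfold reduct at h ⊢
          split at h
          · rw [if_pos (by assumption)]
            unfold nnn at hp
            rw [if_neg hbot] at hp
            intro hYG
            have hXG : Sat X (reduct I G) :=
              (ihG).1 (fun p hpp => hp p (Set.mem_union_left _ hpp)) hYG
            exact (ihH).2 (fun p hpp => hp p (Set.mem_union_right _ hpp)) (h hXG)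
          · exact absurd h not_sat_bot

lemma main_lemma {B C : Set σ} (F : Formula σ)
    (hedge : ∀ p ∈ B, ∀ q ∈ C, ¬ DGEdge F (B ∪ C) p q) (I : Set σ) :
    ∀ G : Formula σ, rules G ⊆ rules F →
      Sat (I \ (B ∪ C)) (reduct I G) → Sat (I \ B) (reduct I G) := by
  have hXY : I \ (B ∪ C) ⊆ I \ B := fun x ⟨hxI, hx⟩ =>
    ⟨hxI, fun hB => hx (Set.mem_union_left _ hB)⟩
  have hYX : (I \ B) \ (I \ (B ∪ C)) ⊆ C := by
    rintro x ⟨⟨hxI, hxB⟩, hx⟩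
    rcases (not_and.1 hx hxI : ¬ x ∉ B ∪ C) |> not_not.1 with hB | hC
    · exact absurd hB hxB
    · exact hC
  intro G
  induction G with
  | atom p =>
      intro _ h
      unfold reduct at h ⊢
      split at h
      · rw [if_pos (by assumption)]
        exact hXY h
      · exact absurd h not_sat_bot
  | conj ι f ih =>
      intro hr h i
      exact ih i (fun R hR => hr (Set.mem_iUnion.2 ⟨i, hR⟩)) (h i)
  | disj ι f ih =>
      rintro hr ⟨i, hi⟩
      exact ⟨i, ih i (fun R hR => hr (Set.mem_iUnion.2 ⟨i, hR⟩)) hi⟩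
  | imp G H ihG ihH =>
      intro hr h
      have hGH : (G, H) ∈ rules F := hr (Set.mem_insert _ _)
      have hrH : rules H ⊆ rules F := fun R hR => hr (Set.mem_insert_of_mem _ hR)
      unfold reduct at h ⊢
      split at h
      · rename_i hI
        rw [if_pos hI]
        intro hKG
        have hcases : (∀ p ∈ spos H, p ∉ B) ∨ (∀ q ∈ pnn G, q ∉ C) := by
          by_contra hcon
          push_neg at hcon
          obtain ⟨⟨p, hpH, hpB⟩, ⟨q, hqG, hqC⟩⟩ := hcon
          exact hedge p hpB q hqC
            ⟨Set.mem_union_left _ hpB, Set.mem_union_right _ hqC, (G, H), hGH, hpH, hqG⟩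
        rcases hcases with hsp | hpn
        · have hIG : Sat I G := sat_of_sat_reduct hKG
          have hIH : Sat I H := hI hIG
          exact sat_reduct_of_spos (fun p hp hpI => ⟨hpI, hsp p hp⟩) hIH
        · have hJG : Sat (I \ (B ∪ C)) (reduct I G) := (anti hXY hYX G).1 hpn hKG
          exact ihH hrH (h hJG)
      · exact absurd h not_sat_bot

end Formula

/-- if `B, C` are disjoint and `DG_{B∪C}[F]` has no edge from `B`
to `C`, then `I \ (B ∪ C) ⊨ F^I` implies `I \ B ⊨ F^I`. -/
theorem sat_reduct_no_edge {σ : Type} (B C : Set σ) (hBC : Disjoint B C)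
    (F : Formula σ)
    (hedge : ∀ p ∈ B, ∀ q ∈ C, ¬ Formula.DGEdge F (B ∪ C) p q)
    (I : Set σ) (h : Formula.Sat (I \ (B ∪ C)) (Formula.reduct I F)) :
    Formula.Sat (I \ B) (Formula.reduct I F) :=
  Formula.main_lemma F hedge I F (fun _ hR => hR) h
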